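/- Let p₁ ∈ (0,1) and ρ_M ∈ [0,1]. Let l_R be a {0,1}-valued process adapted to the filtration (𝓕_i) such that for every i ∈ ℕ, P(l_R(i+1) = 1 ∣ 𝓕_i) ≤ p₁ almost surely, and let l_M be a {0,1}-valued process (not necessarily independent of l_R) with ∑_{k=1}^∞ P( ∑_{i=0}^{k-1} l_M(i) > ρ_M · k ) < ∞. Define the overall loss process l(i) = l_R(i) + (1 − l_R(i))·l_M(i) and L(k) = ∑_{i=0}^{k-1} l(i). If p₁ + ρ_M < 1, then for every ρ ∈ (p₁ + ρ_M, 1), the series ∑_{k=1}^∞ P( L(k) > ρ·k ) is finite. -/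

import Mathlib

open MeasureTheory Filter

private lemma chernoff_tail_summable
    {Ω : Type*} [MeasurableSpace Ω] (μ : Measure Ω) [IsProbabilityMeasure μ]
    (ℱ : Filtration ℕ (inferInstance : MeasurableSpace Ω))
    (p₁ : ℝ) (hp₁ : p₁ ∈ Set.Ioo (0 : ℝ) 1)
    (lR : ℕ → Ω → ℝ)
    (hR01 : ∀ i ω, lR i ω = 0 ∨ lR i ω = 1)
    (hadapted : Adapted ℱ lR)
    (hcond1 : ∀ i, (μ[Set.indicator {ω | lR (i + 1) ω = 1} (fun _ => (1 : ℝ)) | ℱ i])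
      ≤ᵐ[μ] fun _ => p₁)
    (a : ℝ) (ha : p₁ < a) :
    (∑' k : ℕ,
      μ {ω | a * (k + 1 : ℕ) < ∑ i ∈ Finset.range (k + 1), lR i ω}) < ⊤ := by
  obtain ⟨hp0, hp1⟩ := hp₁
  set t : ℝ := min 1 ((a - p₁) / 2) with htdef
  have ht0 : 0 < t := lt_min one_pos (by linarith)
  have ht1 : t ≤ 1 := min_le_left _ _
  have ht2 : t ≤ (a - p₁) / 2 := min_le_right _ _
  have hlR0 : ∀ i ω, 0 ≤ lR i ω := fun i ω => by rcases hR01 i ω with h | h <;> rw [h] <;> norm_num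
  have hlR1 : ∀ i ω, lR i ω ≤ 1 := fun i ω => by rcases hR01 i ω with h | h <;> rw [h] <;> norm_num
  set S : ℕ → Ω → ℝ := fun k ω => ∑ j ∈ Finset.range k, lR (j + 1) ω with hSdef
  have hS0 : ∀ k ω, 0 ≤ S k ω := fun k ω => Finset.sum_nonneg fun j _ => hlR0 _ _
  have hSk : ∀ k ω, S k ω ≤ k := by
    intro k ω
    calc S k ω ≤ ∑ _j ∈ Finset.range k, (1 : ℝ) :=
          Finset.sum_le_sum fun j _ => hlR1 _ _
    _ = k := by simp
  have hSmeas : ∀ k, StronglyMeasurable[ℱ k] (S k) := by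
    intro k
    apply Finset.stronglyMeasurable_fun_sum
    intro j hj
    exact ((hadapted (j + 1)).mono (ℱ.mono (Finset.mem_range.mp hj)) le_rfl).stronglyMeasurable
  set f : ℕ → Ω → ℝ := fun k ω => Real.exp (t * S k ω) with hfdef
  have hfmeas : ∀ k, StronglyMeasurable[ℱ k] (f k) := fun k =>
    Real.continuous_exp.comp_stronglyMeasurable ((hSmeas k).const_mul t)
  have hfpos : ∀ k ω, 0 < f k ω := fun k ω => Real.exp_pos _
  have hfbound : ∀ k ω, f k ω ≤ Real.exp (t * k) := fun k ω =>
    Real.exp_le_exp.mpr (mul_le_mul_of_nonneg_left (hSk k ω) ht0.le)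
  have hfint : ∀ k, Integrable (f k) μ := by
    intro k
    refine (integrable_const (Real.exp (t * k))).mono'
      ((hfmeas k).mono (ℱ.le k)).aestronglyMeasurable (ae_of_all _ fun ω => ?_)
    rw [Real.norm_eq_abs, abs_of_pos (hfpos k ω)]
    exact hfbound k ω
  set B : ℝ := 1 + p₁ * (Real.exp t - 1) with hBdef
  have hB1 : 1 ≤ B := by
    have := Real.one_le_exp ht0.le
    nlinarith
  have key : ∀ k, ∫ ω, f k ω ∂μ ≤ B ^ k := by
    intro k
    induction k with
    | zero =>
      have h0 : ∀ ω, f 0 ω = 1 := by intro ω; simp [hfdef, hSdef]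
      simp [integral_congr_ae (ae_of_all μ h0)]
    | succ k ih =>
      set A : Set Ω := {ω | lR (k + 1) ω = 1} with hAdef
      have hA : MeasurableSet[ℱ (k + 1)] A :=
        (hadapted (k + 1)) (measurableSet_singleton 1)
      have hA0 : MeasurableSet A := ℱ.le (k + 1) _ hA
      set ind : Ω → ℝ := Set.indicator A (fun _ => (1 : ℝ)) with hinddef
      have hind01 : ∀ ω, ind ω = 0 ∨ ind ω = 1 := by
        intro ω
        by_cases h : ω ∈ A
        · right; simp [hinddef, h]
        · left; simp [hinddef, h]
      have hpt : ∀ ω, f (k + 1) ω = f k ω + (Real.exp t - 1) * (f k ω * ind ω) := by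
        intro ω
        have hsum : S (k + 1) ω = S k ω + lR (k + 1) ω := Finset.sum_range_succ _ _
        rcases hR01 (k + 1) ω with h | h
        · have hω : ω ∉ A := by simp [hAdef, h]
          simp only [hfdef, hsum, h, hinddef, Set.indicator_of_notMem hω]
          ring_nf
        · have hω : ω ∈ A := by simp [hAdef, h]
          simp only [hfdef, hsum, h, hinddef, Set.indicator_of_mem hω]
          rw [mul_add, Real.exp_add]
          ring
      have hind_int : Integrable ind μ := (integrable_const (1 : ℝ)).indicator hA0
      have hprod_int : Integrable (f k * ind) μ := by
        refine (integrable_const (Real.exp (t * k))).mono'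
          (((hfmeas k).mono (ℱ.le k)).mul
            (stronglyMeasurable_const.indicator hA0)).aestronglyMeasurable
          (ae_of_all _ fun ω => ?_)
        rcases hind01 ω with h | h <;>
          simp only [Pi.mul_apply, h, mul_zero, mul_one, Real.norm_eq_abs]
        · rw [abs_zero]; positivity
        · rw [abs_of_pos (hfpos k ω)]; exact hfbound k ω
      have hcmul : μ[f k * ind | ℱ k] =ᵐ[μ] f k * μ[ind | ℱ k] :=
        condExp_mul_of_stronglyMeasurable_left (hfmeas k) hprod_int hind_int
      have hstep : ∫ ω, (f k * ind) ω ∂μ ≤ p₁ * ∫ ω, f k ω ∂μ := by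
        rw [← integral_condExp (ℱ.le k) (f := f k * ind)]
        calc ∫ ω, (μ[f k * ind | ℱ k]) ω ∂μ
            ≤ ∫ ω, (f k ω * p₁) ∂μ := by
              refine integral_mono_ae integrable_condExp ((hfint k).mul_const p₁) ?_
              filter_upwards [hcmul, hcond1 k] with ω h1 h2
              rw [h1]
              exact mul_le_mul_of_nonneg_left h2 (hfpos k ω).le
          _ = p₁ * ∫ ω, f k ω ∂μ := by rw [integral_mul_const]; ring
      have hfk_nonneg : 0 ≤ ∫ ω, f k ω ∂μ := integral_nonneg fun ω => (hfpos k ω).le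
      have het : 0 ≤ Real.exp t - 1 := by linarith [Real.one_le_exp ht0.le]
      calc ∫ ω, f (k + 1) ω ∂μ
          = ∫ ω, (f k ω + (Real.exp t - 1) * (f k * ind) ω) ∂μ :=
            integral_congr_ae (ae_of_all _ fun ω => hpt ω)
        _ = (∫ ω, f k ω ∂μ) + (Real.exp t - 1) * ∫ ω, (f k * ind) ω ∂μ := by
            rw [integral_add (hfint k) (hprod_int.const_mul _), integral_const_mul]
        _ ≤ (∫ ω, f k ω ∂μ) + (Real.exp t - 1) * (p₁ * ∫ ω, f k ω ∂μ) := by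
            have := mul_le_mul_of_nonneg_left hstep het
            linarith
        _ = B * ∫ ω, f k ω ∂μ := by rw [hBdef]; ring
        _ ≤ B * B ^ k := mul_le_mul_of_nonneg_left ih (by linarith)
        _ = B ^ (k + 1) := (pow_succ' B k).symm
  set C : ℝ := Real.exp (t * (1 - a)) with hCdef
  set r : ℝ := B * Real.exp (-(t * a)) with hrdef
  have hC0 : 0 ≤ C := Real.exp_nonneg _
  have hr0 : 0 ≤ r := mul_nonneg (by linarith) (Real.exp_nonneg _)
  have hr1 : r < 1 := by
    have hexp2 : Real.exp t ≤ 1 + t + t ^ 2 := by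
      have h := Real.exp_bound' ht0.le ht1 (n := 2) (by norm_num)
      simp [Finset.sum_range_succ] at h
      nlinarith
    have hlt : p₁ * (Real.exp t - 1) < t * a := by nlinarith
    have hBe : B ≤ Real.exp (p₁ * (Real.exp t - 1)) := by
      have := Real.add_one_le_exp (p₁ * (Real.exp t - 1))
      linarith
    calc r ≤ Real.exp (p₁ * (Real.exp t - 1)) * Real.exp (-(t * a)) :=
          mul_le_mul_of_nonneg_right hBe (Real.exp_nonneg _)
      _ = Real.exp (p₁ * (Real.exp t - 1) + -(t * a)) := by rw [← Real.exp_add]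
      _ < 1 := Real.exp_lt_one_iff.mpr (by linarith)
  have markov : ∀ k : ℕ,
      μ {ω | a * (k + 1 : ℕ) < ∑ i ∈ Finset.range (k + 1), lR i ω}
        ≤ ENNReal.ofReal (C * r ^ k) := by
    intro k
    set ε : ℝ := Real.exp (t * (a * (k + 1 : ℕ) - 1)) with hεdef
    have hε : 0 < ε := Real.exp_pos _
    have hincl : {ω | a * (k + 1 : ℕ) < ∑ i ∈ Finset.range (k + 1), lR i ω}
        ⊆ {x | ε ≤ f k x} := by
      intro ω hω
      simp only [Set.mem_setOf_eq] at hω ⊢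
      have hshift : ∑ i ∈ Finset.range (k + 1), lR i ω = S k ω + lR 0 ω := by
        rw [hSdef]; exact Finset.sum_range_succ' _ _
      have h1 : a * (k + 1 : ℕ) - 1 ≤ S k ω := by
        have := hlR1 0 ω
        rw [hshift] at hω
        linarith
      exact Real.exp_le_exp.mpr (mul_le_mul_of_nonneg_left h1 ht0.le)
    have hmk := mul_meas_ge_le_integral_of_nonneg
      (ae_of_all μ fun ω => (hfpos k ω).le) (hfint k) ε
    have hfin : μ {x | ε ≤ f k x} ≠ ⊤ := (measure_lt_top μ _).ne
    have hgeom : B ^ k / ε = C * r ^ k := by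
      rw [hεdef, hCdef, hrdef, mul_pow, ← Real.exp_nat_mul, div_eq_mul_inv, ← Real.exp_neg,
        show -(t * (a * ((k + 1 : ℕ) : ℝ) - 1)) = t * (1 - a) + (k : ℝ) * -(t * a) by
          push_cast; ring,
        Real.exp_add]
      ring
    have htom : (μ {x | ε ≤ f k x}).toReal ≤ C * r ^ k := by
      rw [← hgeom, le_div_iff₀ hε]
      calc (μ {x | ε ≤ f k x}).toReal * ε = ε * (μ {x | ε ≤ f k x}).toReal := mul_comm _ _
        _ ≤ ∫ ω, f k ω ∂μ := hmk
        _ ≤ B ^ k := key k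
    calc μ {ω | a * (k + 1 : ℕ) < ∑ i ∈ Finset.range (k + 1), lR i ω}
        ≤ μ {x | ε ≤ f k x} := measure_mono hincl
      _ = ENNReal.ofReal ((μ {x | ε ≤ f k x}).toReal) := (ENNReal.ofReal_toReal hfin).symm
      _ ≤ ENNReal.ofReal (C * r ^ k) := ENNReal.ofReal_le_ofReal htom
  have hsummable : Summable (fun k : ℕ => C * r ^ k) :=
    (summable_geometric_of_lt_one hr0 hr1).mul_left C
  calc (∑' k : ℕ, μ {ω | a * (k + 1 : ℕ) < ∑ i ∈ Finset.range (k + 1), lR i ω})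
      ≤ ∑' k : ℕ, ENNReal.ofReal (C * r ^ k) := ENNReal.tsum_le_tsum markov
    _ = ENNReal.ofReal (∑' k : ℕ, C * r ^ k) :=
        (ENNReal.ofReal_tsum_of_nonneg (fun k => by positivity) hsummable).symm
    _ < ⊤ := ENNReal.ofReal_lt_top

theorem combined_dependent_loss_tail_summable
    {Ω : Type*} [MeasurableSpace Ω] (μ : Measure Ω) [IsProbabilityMeasure μ]
    (ℱ : Filtration ℕ (inferInstance : MeasurableSpace Ω))
    (p₁ : ℝ) (hp₁ : p₁ ∈ Set.Ioo (0 : ℝ) 1)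
    (ρM : ℝ) (hρM : ρM ∈ Set.Icc (0 : ℝ) 1)
    (lR lM : ℕ → Ω → ℝ)
    (hR01 : ∀ i ω, lR i ω = 0 ∨ lR i ω = 1)
    (hM01 : ∀ i ω, lM i ω = 0 ∨ lM i ω = 1)
    (hadapted : Adapted ℱ lR)
    (hcond1 : ∀ i, (μ[Set.indicator {ω | lR (i + 1) ω = 1} (fun _ => (1 : ℝ)) | ℱ i])
      ≤ᵐ[μ] fun _ => p₁)
    (hMsum : (∑' k : ℕ,
      μ {ω | ρM * (k + 1 : ℕ) < ∑ i ∈ Finset.range (k + 1), lM i ω}) < ⊤)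
    (l : ℕ → Ω → ℝ)
    (hl : ∀ i ω, l i ω = lR i ω + (1 - lR i ω) * lM i ω)
    (hsum : p₁ + ρM < 1)
    (ρ : ℝ) (hρ : ρ ∈ Set.Ioo (p₁ + ρM) 1) :
    (∑' k : ℕ,
      μ {ω | ρ * (k + 1 : ℕ) < ∑ i ∈ Finset.range (k + 1), l i ω}) < ⊤ := by
  set a : ℝ := ρ - ρM with hadef
  have ha : p₁ < a := by have := hρ.1; rw [hadef]; linarith
  have hR := chernoff_tail_summable μ ℱ p₁ hp₁ lR hR01 hadapted hcond1 a ha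
  have hincl : ∀ k : ℕ,
      {ω | ρ * (k + 1 : ℕ) < ∑ i ∈ Finset.range (k + 1), l i ω}
        ⊆ {ω | a * (k + 1 : ℕ) < ∑ i ∈ Finset.range (k + 1), lR i ω}
          ∪ {ω | ρM * (k + 1 : ℕ) < ∑ i ∈ Finset.range (k + 1), lM i ω} := by
    intro k ω hω
    simp only [Set.mem_setOf_eq, Set.mem_union] at hω ⊢
    by_cases hM : ρM * (k + 1 : ℕ) < ∑ i ∈ Finset.range (k + 1), lM i ω
    · exact Or.inr hM
    · left
      push_neg at hM
      have hle : ∑ i ∈ Finset.range (k + 1), l i ω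
          ≤ (∑ i ∈ Finset.range (k + 1), lR i ω) + ∑ i ∈ Finset.range (k + 1), lM i ω := by
        rw [← Finset.sum_add_distrib]
        refine Finset.sum_le_sum fun i _ => ?_
        rw [hl i ω]
        rcases hR01 i ω with h | h <;> rcases hM01 i ω with h' | h' <;>
          rw [h, h'] <;> norm_num
      rw [hadef]
      have h1 : ρ * (k + 1 : ℕ) = a * (k + 1 : ℕ) + ρM * (k + 1 : ℕ) := by
        rw [hadef]; ring
      rw [hadef] at h1
      linarith
  calc (∑' k : ℕ, μ {ω | ρ * (k + 1 : ℕ) < ∑ i ∈ Finset.range (k + 1), l i ω})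
      ≤ ∑' k : ℕ,
        (μ {ω | a * (k + 1 : ℕ) < ∑ i ∈ Finset.range (k + 1), lR i ω}
          + μ {ω | ρM * (k + 1 : ℕ) < ∑ i ∈ Finset.range (k + 1), lM i ω}) := by
        refine ENNReal.tsum_le_tsum fun k => ?_
        exact (measure_mono (hincl k)).trans (measure_union_le _ _)
    _ = (∑' k : ℕ, μ {ω | a * (k + 1 : ℕ) < ∑ i ∈ Finset.range (k + 1), lR i ω})
        + ∑' k : ℕ, μ {ω | ρM * (k + 1 : ℕ) < ∑ i ∈ Finset.range (k + 1), lM i ω} :=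
        ENNReal.tsum_add
    _ < ⊤ := ENNReal.add_lt_top.mpr ⟨hR, hMsum⟩
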